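/- On ℂⁿ (n ≥ 2) with standard complex structure J = i, let ∇ be the complex connection whose only nonzero Christoffel symbols in complex coordinates (z¹,...,zⁿ) are Γ²₁₁ = z̄¹ (and its conjugate Γ^{2̄}_{1̄1̄} = z¹). Then the real and imaginary parts of the vector field ∂_{z¹} - (1/2)(z̄¹)² ∂_{z̄²} are c-projective symmetries of (J,[∇]); that is, for v = Re(∂_{z¹} - (1/2)(z̄¹)² ∂_{z̄²}) (and similarly for the imaginary part), L_v J = 0 and L_v Γ has the form Ω^i_{jk} = φ_j δ^i_k + φ_k δ^i_j - φ_α J^α_j J^i_k - φ_α J^α_k J^i_j for some 1-form φ. -/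

import Mathlib

set_option linter.unusedSectionVars false
set_option linter.unreachableTactic false
set_option linter.unusedTactic false
set_option maxHeartbeats 1000000



open Finset

/-- partial derivative in the `i`-th coordinate direction -/
noncomputable def pder7 {ι : Type*} [Fintype ι] [DecidableEq ι]
    (i : ι) (f : (ι → ℝ) → ℝ) (p : ι → ℝ) : ℝ :=
  fderiv ℝ f p (Pi.single i 1)

/-- the standard complex structure on `ℝ^{2n} ≅ ℂⁿ`; coordinates are indexed by
`(k, 0) ↦ x_{k+1}`, `(k, 1) ↦ y_{k+1}` where `z_{k+1} = x_{k+1} + i y_{k+1}`. -/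
def Jstd7 (n : ℕ) (i j : Fin n × Fin 2) : ℝ :=
  if i.1 = j.1 ∧ i.2 = 1 ∧ j.2 = 0 then 1
  else if i.1 = j.1 ∧ i.2 = 0 ∧ j.2 = 1 then -1 else 0

/-- the real Christoffel symbols of the connection on `ℂⁿ` with the single nonzero
complex Christoffel symbol `Γ²₁₁ = z̄¹` (plus its conjugate `Γ^{2̄}_{1̄1̄} = z¹`). -/
def Gam7 (n : ℕ) [NeZero n] (i j k : Fin n × Fin 2) (p : Fin n × Fin 2 → ℝ) : ℝ :=
  if i = ((1,0) : Fin n × Fin 2) ∧ j = ((0,0) : Fin n × Fin 2) ∧ k = ((0,0) : Fin n × Fin 2)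
    then p (0,0)
  else if i = ((1,1) : Fin n × Fin 2) ∧ j = ((0,0) : Fin n × Fin 2) ∧ k = ((0,0) : Fin n × Fin 2)
    then -p (0,1)
  else if i = ((1,0) : Fin n × Fin 2) ∧ j = ((0,1) : Fin n × Fin 2) ∧ k = ((0,1) : Fin n × Fin 2)
    then -p (0,0)
  else if i = ((1,1) : Fin n × Fin 2) ∧ j = ((0,1) : Fin n × Fin 2) ∧ k = ((0,1) : Fin n × Fin 2)
    then p (0,1)
  else if i = ((1,0) : Fin n × Fin 2) ∧
      (j = ((0,0) : Fin n × Fin 2) ∧ k = ((0,1) : Fin n × Fin 2) ∨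
       j = ((0,1) : Fin n × Fin 2) ∧ k = ((0,0) : Fin n × Fin 2))
    then p (0,1)
  else if i = ((1,1) : Fin n × Fin 2) ∧
      (j = ((0,0) : Fin n × Fin 2) ∧ k = ((0,1) : Fin n × Fin 2) ∨
       j = ((0,1) : Fin n × Fin 2) ∧ k = ((0,0) : Fin n × Fin 2))
    then p (0,0)
  else 0

/-- the Lie derivative `(L_v Γ)^i_{jk} = v^l ∂_l Γ^i_{jk} - (∂_l v^i) Γ^l_{jk}
  + (∂_j v^l) Γ^i_{lk} + (∂_k v^l) Γ^i_{jl} + ∂_j ∂_k v^i`. -/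
noncomputable def LvGam7 (n : ℕ)
    (Γ : (Fin n × Fin 2) → (Fin n × Fin 2) → (Fin n × Fin 2) → (Fin n × Fin 2 → ℝ) → ℝ)
    (v : (Fin n × Fin 2 → ℝ) → (Fin n × Fin 2) → ℝ)
    (i j k : Fin n × Fin 2) (p : Fin n × Fin 2 → ℝ) : ℝ :=
  (∑ l, v p l * pder7 l (Γ i j k) p)
  - (∑ l, pder7 l (fun q => v q i) p * Γ l j k p)
  + (∑ l, pder7 j (fun q => v q l) p * Γ i l k p)
  + (∑ l, pder7 k (fun q => v q l) p * Γ i j l p)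
  + pder7 j (fun q => pder7 k (fun r => v r i) q) p

/-- `v` is a c-projective symmetry of `(J, [∇])`: `L_v J = 0` and `L_v Γ` has the pure-trace
form `Ω^i_{jk} = φ_j δ^i_k + φ_k δ^i_j - φ_α J^α_j J^i_k - φ_α J^α_k J^i_j`. -/
noncomputable def IsCprojSym7 (n : ℕ) [NeZero n]
    (v : (Fin n × Fin 2 → ℝ) → (Fin n × Fin 2) → ℝ) : Prop :=
  (∀ (i j : Fin n × Fin 2) (p : Fin n × Fin 2 → ℝ),
    (∑ l, v p l * pder7 l (fun _ => Jstd7 n i j) p)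
    + (∑ l, Jstd7 n i l * pder7 j (fun q => v q l) p)
    - (∑ l, Jstd7 n l j * pder7 l (fun q => v q i) p) = 0) ∧
  (∃ φ : (Fin n × Fin 2 → ℝ) → (Fin n × Fin 2) → ℝ,
    ∀ (i j k : Fin n × Fin 2) (p : Fin n × Fin 2 → ℝ),
      LvGam7 n (Gam7 n) v i j k p =
        (if i = k then φ p j else 0) + (if i = j then φ p k else 0)
        - (∑ a, φ p a * Jstd7 n a j) * Jstd7 n i k
        - (∑ a, φ p a * Jstd7 n a k) * Jstd7 n i j)

/-- the real part of the complex vector field `∂_{z¹} - (1/2)(z̄¹)² ∂_{z̄²}` -/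
noncomputable def vRe7 (n : ℕ) [NeZero n]
    (p : Fin n × Fin 2 → ℝ) (i : Fin n × Fin 2) : ℝ :=
  if i = ((0,0) : Fin n × Fin 2) then 1/2
  else if i = ((1,0) : Fin n × Fin 2) then -(1/4) * (p (0,0)^2 - p (0,1)^2)
  else if i = ((1,1) : Fin n × Fin 2) then -(1/2) * p (0,0) * p (0,1)
  else 0

/-- the imaginary part of the complex vector field `∂_{z¹} - (1/2)(z̄¹)² ∂_{z̄²}` -/
noncomputable def vIm7 (n : ℕ) [NeZero n]
    (p : Fin n × Fin 2 → ℝ) (i : Fin n × Fin 2) : ℝ :=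
  if i = ((0,1) : Fin n × Fin 2) then -(1/2)
  else if i = ((1,0) : Fin n × Fin 2) then (1/2) * p (0,0) * p (0,1)
  else if i = ((1,1) : Fin n × Fin 2) then -(1/4) * (p (0,0)^2 - p (0,1)^2)
  else 0


section tool
variable {ι : Type*} [Fintype ι] [DecidableEq ι]
lemma diffAt_coord (m : ι) (p : ι → ℝ) : DifferentiableAt ℝ (fun q : ι → ℝ => q m) p :=
  (ContinuousLinearMap.proj m : (ι → ℝ) →L[ℝ] ℝ).differentiableAt
lemma pder7_coord (i m : ι) (p : ι → ℝ) :
    pder7 i (fun q => q m) p = if m = i then 1 else 0 := by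
  unfold pder7
  rw [show (fun q : ι → ℝ => q m) = (ContinuousLinearMap.proj m : (ι → ℝ) →L[ℝ] ℝ) from rfl,
    ContinuousLinearMap.fderiv]
  simp [Pi.single_apply]
lemma pder7_const (i : ι) (c : ℝ) (p : ι → ℝ) : pder7 i (fun _ => c) p = 0 := by
  unfold pder7; rw [fderiv_fun_const]; simp
lemma pder7_neg (i : ι) (f : (ι → ℝ) → ℝ) (p : ι → ℝ) :
    pder7 i (fun q => -f q) p = -pder7 i f p := by
  unfold pder7; rw [fderiv_fun_neg]; simp
lemma pder7_mul (i : ι) {f g : (ι → ℝ) → ℝ} (p : ι → ℝ)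
    (hf : DifferentiableAt ℝ f p) (hg : DifferentiableAt ℝ g p) :
    pder7 i (fun q => f q * g q) p = pder7 i f p * g p + f p * pder7 i g p := by
  unfold pder7; rw [fderiv_fun_mul hf hg]; simp; ring
lemma pder7_sub (i : ι) {f g : (ι → ℝ) → ℝ} (p : ι → ℝ)
    (hf : DifferentiableAt ℝ f p) (hg : DifferentiableAt ℝ g p) :
    pder7 i (fun q => f q - g q) p = pder7 i f p - pder7 i g p := by
  unfold pder7; rw [fderiv_fun_sub hf hg]; simp
lemma pder7_const_mul (i : ι) {f : (ι → ℝ) → ℝ} (c : ℝ) (p : ι → ℝ)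
    (hf : DifferentiableAt ℝ f p) :
    pder7 i (fun q => c * f q) p = c * pder7 i f p := by
  unfold pder7; rw [fderiv_const_mul hf]; simp
end tool

section main
variable {n : ℕ} [NeZero n]

lemma h01 (hn : 2 ≤ n) : (0 : Fin n) ≠ 1 := by
  intro h
  have := congrArg Fin.val h
  rw [Fin.val_zero, Fin.val_one', Nat.mod_eq_of_lt (by omega : 1 < n)] at this
  exact absurd this (by omega)

lemma pder_vRe (hn : 2 ≤ n) (k i : Fin n × Fin 2) (p : Fin n × Fin 2 → ℝ) :
    pder7 k (fun q => vRe7 n q i) p =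
      if i = ((1,0) : Fin n × Fin 2) then
        (if k = ((0,0) : Fin n × Fin 2) then -(1/2) * p (0,0)
         else if k = ((0,1) : Fin n × Fin 2) then (1/2) * p (0,1) else 0)
      else if i = ((1,1) : Fin n × Fin 2) then
        (if k = ((0,0) : Fin n × Fin 2) then -(1/2) * p (0,1)
         else if k = ((0,1) : Fin n × Fin 2) then -(1/2) * p (0,0) else 0)
      else 0 := by
  have h10 : ((1 : Fin n), (0 : Fin 2)) ≠ ((0 : Fin n), (0 : Fin 2)) := by
    simp [Prod.ext_iff, (h01 hn).symm]
  have h11 : ((1 : Fin n), (1 : Fin 2)) ≠ ((0 : Fin n), (0 : Fin 2)) := by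
    simp [Prod.ext_iff, (h01 hn).symm]
  have h1011 : ((1 : Fin n), (0 : Fin 2)) ≠ ((1 : Fin n), (1 : Fin 2)) := by
    simp [Prod.ext_iff]
  have hn1 : n ≠ 1 := by omega
  have e1 : ((0:Fin n × Fin 2) = ((0:Fin n),(1:Fin 2))) = False := by simp [Prod.ext_iff]
  have e2 : ((((0:Fin n),(1:Fin 2))) = (0:Fin n × Fin 2)) = False := by simp [Prod.ext_iff]
  have E1 : ((((0:Fin n),(1:Fin 2))) = ((0:Fin n),(0:Fin 2))) = False := by simp [Prod.ext_iff]
  have E2 : ((((0:Fin n),(0:Fin 2))) = ((0:Fin n),(1:Fin 2))) = False := by simp [Prod.ext_iff]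
  have e3 : ((0:Fin n × Fin 2) = ((1:Fin n),(0:Fin 2))) = False := by
    simp [Prod.ext_iff, h01 hn]
  have e4 : ((0:Fin n × Fin 2) = ((1:Fin n),(1:Fin 2))) = False := by
    simp [Prod.ext_iff, h01 hn]
  by_cases hi0 : i = ((0,0) : Fin n × Fin 2)
  · simp only [vRe7, hi0, if_pos rfl, if_true, eq_self_iff_true]
    rw [pder7_const]
    simp [e3, e4, hn1]
  · by_cases hi1 : i = ((1,0) : Fin n × Fin 2)
    · simp only [vRe7, hi1, if_neg h10, if_pos rfl, if_true, eq_self_iff_true, pow_two]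
      rw [pder7_const_mul _ _ _ (((diffAt_coord _ _).mul (diffAt_coord _ _)).sub
            ((diffAt_coord _ _).mul (diffAt_coord _ _))),
          pder7_sub _ _ ((diffAt_coord _ _).mul (diffAt_coord _ _))
            ((diffAt_coord _ _).mul (diffAt_coord _ _)),
          pder7_mul _ _ (diffAt_coord _ _) (diffAt_coord _ _),
          pder7_mul _ _ (diffAt_coord _ _) (diffAt_coord _ _),
          pder7_coord, pder7_coord]
      by_cases hk0 : k = ((0,0) : Fin n × Fin 2)
      · subst hk0
        simp [e1, e2, E1, E2]
        try ring
      · by_cases hk1 : k = ((0,1) : Fin n × Fin 2)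
        · subst hk1
          simp [e1, e2, E1, E2]
          try ring
        · have k1 : (((0:Fin n),(0:Fin 2)) = k) = False := eq_false fun h => hk0 h.symm
          have k2 : ((0:Fin n × Fin 2) = k) = False := by
            rw [← Prod.mk_zero_zero]; exact k1
          have k3 : (k = (0:Fin n × Fin 2)) = False := by
            rw [← Prod.mk_zero_zero]; exact eq_false hk0
          have k5 : (((0:Fin n),(1:Fin 2)) = k) = False := eq_false fun h => hk1 h.symm
          simp [k1, k2, k3, k5, hk0, hk1]
    · by_cases hi2 : i = ((1,1) : Fin n × Fin 2)
      · simp only [vRe7, hi2, if_neg h11, if_neg h1011.symm, if_pos rfl, if_true, eq_self_iff_true]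
        rw [show (fun q : Fin n × Fin 2 → ℝ => -(1/2) * q (0,0) * q (0,1)) =
              (fun q : Fin n × Fin 2 → ℝ => (-(1/2)) * (q (0,0) * q (0,1))) from by
            funext q; ring,
          pder7_const_mul _ _ _ ((diffAt_coord _ _).mul (diffAt_coord _ _)),
          pder7_mul _ _ (diffAt_coord _ _) (diffAt_coord _ _),
          pder7_coord, pder7_coord]
        by_cases hk0 : k = ((0,0) : Fin n × Fin 2)
        · subst hk0
          simp [e1, e2, E1, E2]
          try ring
        · by_cases hk1 : k = ((0,1) : Fin n × Fin 2)
          · subst hk1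
            simp [e1, e2, E1, E2]
            try ring
          · have k1 : (((0:Fin n),(0:Fin 2)) = k) = False := eq_false fun h => hk0 h.symm
            have k2 : ((0:Fin n × Fin 2) = k) = False := by
              rw [← Prod.mk_zero_zero]; exact k1
            have k3 : (k = (0:Fin n × Fin 2)) = False := by
              rw [← Prod.mk_zero_zero]; exact eq_false hk0
            have k5 : (((0:Fin n),(1:Fin 2)) = k) = False := eq_false fun h => hk1 h.symm
            simp [k1, k2, k3, k5, hk0, hk1]
      · simp only [vRe7, if_neg hi0, if_neg hi1, if_neg hi2]
        rw [pder7_const]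
lemma pder_vIm (hn : 2 ≤ n) (k i : Fin n × Fin 2) (p : Fin n × Fin 2 → ℝ) :
    pder7 k (fun q => vIm7 n q i) p =
      if i = ((1,0) : Fin n × Fin 2) then
        (if k = ((0,0) : Fin n × Fin 2) then (1/2) * p (0,1)
         else if k = ((0,1) : Fin n × Fin 2) then (1/2) * p (0,0) else 0)
      else if i = ((1,1) : Fin n × Fin 2) then
        (if k = ((0,0) : Fin n × Fin 2) then -(1/2) * p (0,0)
         else if k = ((0,1) : Fin n × Fin 2) then (1/2) * p (0,1) else 0)
      else 0 := by
  have h10 : ((1 : Fin n), (0 : Fin 2)) ≠ ((0 : Fin n), (1 : Fin 2)) := by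
    simp [Prod.ext_iff, (h01 hn).symm]
  have h11 : ((1 : Fin n), (1 : Fin 2)) ≠ ((0 : Fin n), (1 : Fin 2)) := by
    simp [Prod.ext_iff, (h01 hn).symm]
  have h1011 : ((1 : Fin n), (0 : Fin 2)) ≠ ((1 : Fin n), (1 : Fin 2)) := by
    simp [Prod.ext_iff]
  have hn1 : n ≠ 1 := by omega
  have e1 : ((0:Fin n × Fin 2) = ((0:Fin n),(1:Fin 2))) = False := by simp [Prod.ext_iff]
  have e2 : ((((0:Fin n),(1:Fin 2))) = (0:Fin n × Fin 2)) = False := by simp [Prod.ext_iff]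
  have E1 : ((((0:Fin n),(1:Fin 2))) = ((0:Fin n),(0:Fin 2))) = False := by simp [Prod.ext_iff]
  have E2 : ((((0:Fin n),(0:Fin 2))) = ((0:Fin n),(1:Fin 2))) = False := by simp [Prod.ext_iff]
  have e3 : ((0:Fin n × Fin 2) = ((1:Fin n),(0:Fin 2))) = False := by
    simp [Prod.ext_iff, h01 hn]
  have e4 : ((0:Fin n × Fin 2) = ((1:Fin n),(1:Fin 2))) = False := by
    simp [Prod.ext_iff, h01 hn]
  by_cases hi0 : i = (((0:Fin n),(1:Fin 2)) : Fin n × Fin 2)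
  · simp only [vIm7, hi0, if_pos rfl, if_true, eq_self_iff_true]
    rw [pder7_const]
    simp [Prod.ext_iff, (h01 hn).symm, hn1]
  · by_cases hi1 : i = ((1,0) : Fin n × Fin 2)
    · simp only [vIm7, hi1, if_neg h10, if_pos rfl, if_true, eq_self_iff_true]
      rw [show (fun q : Fin n × Fin 2 → ℝ => 1/2 * q (0,0) * q (0,1)) =
            (fun q : Fin n × Fin 2 → ℝ => (1/2 : ℝ) * (q (0,0) * q (0,1))) from by
          funext q; ring,
        pder7_const_mul _ _ _ ((diffAt_coord _ _).mul (diffAt_coord _ _)),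
        pder7_mul _ _ (diffAt_coord _ _) (diffAt_coord _ _),
        pder7_coord, pder7_coord]
      by_cases hk0 : k = ((0,0) : Fin n × Fin 2)
      · subst hk0
        simp [e1, e2, E1, E2]
        try ring
      · by_cases hk1 : k = ((0,1) : Fin n × Fin 2)
        · subst hk1
          simp [e1, e2, E1, E2]
          try ring
        · have k1 : (((0:Fin n),(0:Fin 2)) = k) = False := eq_false fun h => hk0 h.symm
          have k2 : ((0:Fin n × Fin 2) = k) = False := by
            rw [← Prod.mk_zero_zero]; exact k1
          have k3 : (k = (0:Fin n × Fin 2)) = False := by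
            rw [← Prod.mk_zero_zero]; exact eq_false hk0
          have k5 : (((0:Fin n),(1:Fin 2)) = k) = False := eq_false fun h => hk1 h.symm
          simp [k1, k2, k3, k5, hk0, hk1]
    · by_cases hi2 : i = ((1,1) : Fin n × Fin 2)
      · simp only [vIm7, hi2, if_neg h11, if_neg h1011.symm, if_pos rfl, if_true,
          eq_self_iff_true, pow_two]
        rw [pder7_const_mul _ _ _ (((diffAt_coord _ _).mul (diffAt_coord _ _)).sub
              ((diffAt_coord _ _).mul (diffAt_coord _ _))),
            pder7_sub _ _ ((diffAt_coord _ _).mul (diffAt_coord _ _))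
              ((diffAt_coord _ _).mul (diffAt_coord _ _)),
            pder7_mul _ _ (diffAt_coord _ _) (diffAt_coord _ _),
            pder7_mul _ _ (diffAt_coord _ _) (diffAt_coord _ _),
            pder7_coord, pder7_coord]
        by_cases hk0 : k = ((0,0) : Fin n × Fin 2)
        · subst hk0
          simp [e1, e2, E1, E2]
          try ring
        · by_cases hk1 : k = ((0,1) : Fin n × Fin 2)
          · subst hk1
            simp [e1, e2, E1, E2]
            try ring
          · have k1 : (((0:Fin n),(0:Fin 2)) = k) = False := eq_false fun h => hk0 h.symm
            have k2 : ((0:Fin n × Fin 2) = k) = False := by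
              rw [← Prod.mk_zero_zero]; exact k1
            have k3 : (k = (0:Fin n × Fin 2)) = False := by
              rw [← Prod.mk_zero_zero]; exact eq_false hk0
            have k5 : (((0:Fin n),(1:Fin 2)) = k) = False := eq_false fun h => hk1 h.symm
            simp [k1, k2, k3, k5, hk0, hk1]
      · simp only [vIm7, if_neg hi0, if_neg hi1, if_neg hi2]
        rw [pder7_const]

lemma pder7_lin (c : ℝ) (m j : Fin n × Fin 2) (p : Fin n × Fin 2 → ℝ) :
    pder7 j (fun q => c * q m) p = if m = j then c else 0 := by
  rw [pder7_const_mul _ _ _ (diffAt_coord _ _), pder7_coord]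
  split_ifs <;> simp

lemma pder2_vRe (hn : 2 ≤ n) (j k i : Fin n × Fin 2) (p : Fin n × Fin 2 → ℝ) :
    pder7 j (fun q => pder7 k (fun r => vRe7 n r i) q) p =
      if i = ((1,0) : Fin n × Fin 2) ∧ j = ((0,0) : Fin n × Fin 2) ∧ k = ((0,0) : Fin n × Fin 2)
        then -(1/2)
      else if i = ((1,0) : Fin n × Fin 2) ∧ j = ((0,1) : Fin n × Fin 2) ∧
          k = ((0,1) : Fin n × Fin 2) then 1/2
      else if i = ((1,1) : Fin n × Fin 2) ∧
          (j = ((0,0) : Fin n × Fin 2) ∧ k = ((0,1) : Fin n × Fin 2) ∨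
           j = ((0,1) : Fin n × Fin 2) ∧ k = ((0,0) : Fin n × Fin 2)) then -(1/2)
      else 0 := by
  rw [show (fun q => pder7 k (fun r => vRe7 n r i) q) = (fun q : Fin n × Fin 2 → ℝ =>
      if i = ((1,0) : Fin n × Fin 2) then
        (if k = ((0,0) : Fin n × Fin 2) then -(1/2) * q (0,0)
         else if k = ((0,1) : Fin n × Fin 2) then (1/2) * q (0,1) else 0)
      else if i = ((1,1) : Fin n × Fin 2) then
        (if k = ((0,0) : Fin n × Fin 2) then -(1/2) * q (0,1)
         else if k = ((0,1) : Fin n × Fin 2) then -(1/2) * q (0,0) else 0)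
      else 0) from funext fun q => pder_vRe hn k i q]
  have N1 : ((1,0) : Fin n × Fin 2) ≠ ((1,1) : Fin n × Fin 2) := by simp [Prod.ext_iff]
  have N1' : ((1,1) : Fin n × Fin 2) ≠ ((1,0) : Fin n × Fin 2) := by simp [Prod.ext_iff]
  have N2 : ((0,0) : Fin n × Fin 2) ≠ ((0,1) : Fin n × Fin 2) := by simp [Prod.ext_iff]
  have N2' : ((0,1) : Fin n × Fin 2) ≠ ((0,0) : Fin n × Fin 2) := by simp [Prod.ext_iff]
  by_cases hi1 : i = ((1,0) : Fin n × Fin 2) <;>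
    by_cases hi2 : i = ((1,1) : Fin n × Fin 2) <;>
    by_cases hk0 : k = ((0,0) : Fin n × Fin 2) <;>
    by_cases hk1 : k = ((0,1) : Fin n × Fin 2) <;>
    by_cases hj0 : j = ((0,0) : Fin n × Fin 2) <;>
    by_cases hj1 : j = ((0,1) : Fin n × Fin 2) <;>
    first
      | exact absurd (hi1.symm.trans hi2) N1
      | exact absurd (hk0.symm.trans hk1) N2
      | exact absurd (hj0.symm.trans hj1) N2
      | (simp only [hi1, hi2, hk0, hk1, hj0, hj1, N1, N1', N2, N2', eq_self_iff_true,
          if_true, if_false, true_and, and_true, false_and, and_false, true_or, or_true,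
          false_or, or_false, not_false_iff]
         first
           | (rw [pder7_const]; try norm_num)
           | (rw [pder7_lin]; try (split_ifs <;> simp_all))
           | (split_ifs <;> simp_all)
           | norm_num
           | rfl)

lemma pder2_vIm (hn : 2 ≤ n) (j k i : Fin n × Fin 2) (p : Fin n × Fin 2 → ℝ) :
    pder7 j (fun q => pder7 k (fun r => vIm7 n r i) q) p =
      if i = ((1,1) : Fin n × Fin 2) ∧ j = ((0,0) : Fin n × Fin 2) ∧ k = ((0,0) : Fin n × Fin 2)
        then -(1/2)
      else if i = ((1,1) : Fin n × Fin 2) ∧ j = ((0,1) : Fin n × Fin 2) ∧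
          k = ((0,1) : Fin n × Fin 2) then 1/2
      else if i = ((1,0) : Fin n × Fin 2) ∧
          (j = ((0,0) : Fin n × Fin 2) ∧ k = ((0,1) : Fin n × Fin 2) ∨
           j = ((0,1) : Fin n × Fin 2) ∧ k = ((0,0) : Fin n × Fin 2)) then 1/2
      else 0 := by
  rw [show (fun q => pder7 k (fun r => vIm7 n r i) q) = (fun q : Fin n × Fin 2 → ℝ =>
      if i = ((1,0) : Fin n × Fin 2) then
        (if k = ((0,0) : Fin n × Fin 2) then (1/2) * q (0,1)
         else if k = ((0,1) : Fin n × Fin 2) then (1/2) * q (0,0) else 0)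
      else if i = ((1,1) : Fin n × Fin 2) then
        (if k = ((0,0) : Fin n × Fin 2) then -(1/2) * q (0,0)
         else if k = ((0,1) : Fin n × Fin 2) then (1/2) * q (0,1) else 0)
      else 0) from funext fun q => pder_vIm hn k i q]
  have N1 : ((1,0) : Fin n × Fin 2) ≠ ((1,1) : Fin n × Fin 2) := by simp [Prod.ext_iff]
  have N1' : ((1,1) : Fin n × Fin 2) ≠ ((1,0) : Fin n × Fin 2) := by simp [Prod.ext_iff]
  have N2 : ((0,0) : Fin n × Fin 2) ≠ ((0,1) : Fin n × Fin 2) := by simp [Prod.ext_iff]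
  have N2' : ((0,1) : Fin n × Fin 2) ≠ ((0,0) : Fin n × Fin 2) := by simp [Prod.ext_iff]
  by_cases hi1 : i = ((1,0) : Fin n × Fin 2) <;>
    by_cases hi2 : i = ((1,1) : Fin n × Fin 2) <;>
    by_cases hk0 : k = ((0,0) : Fin n × Fin 2) <;>
    by_cases hk1 : k = ((0,1) : Fin n × Fin 2) <;>
    by_cases hj0 : j = ((0,0) : Fin n × Fin 2) <;>
    by_cases hj1 : j = ((0,1) : Fin n × Fin 2) <;>
    first
      | exact absurd (hi1.symm.trans hi2) N1
      | exact absurd (hk0.symm.trans hk1) N2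
      | exact absurd (hj0.symm.trans hj1) N2
      | (simp only [hi1, hi2, hk0, hk1, hj0, hj1, N1, N1', N2, N2', eq_self_iff_true,
          if_true, if_false, true_and, and_true, false_and, and_false, true_or, or_true,
          false_or, or_false, not_false_iff]
         first
           | (rw [pder7_const]; try norm_num)
           | (rw [pder7_lin]; try (split_ifs <;> simp_all))
           | (split_ifs <;> simp_all)
           | norm_num
           | rfl)

lemma pder_Gam (l i j k : Fin n × Fin 2) (p : Fin n × Fin 2 → ℝ) :
    pder7 l (Gam7 n i j k) p =
      if i = ((1,0) : Fin n × Fin 2) ∧ j = ((0,0) : Fin n × Fin 2) ∧ k = ((0,0) : Fin n × Fin 2)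
        then (if l = ((0,0) : Fin n × Fin 2) then 1 else 0)
      else if i = ((1,1) : Fin n × Fin 2) ∧ j = ((0,0) : Fin n × Fin 2) ∧
          k = ((0,0) : Fin n × Fin 2) then (if l = ((0,1) : Fin n × Fin 2) then -1 else 0)
      else if i = ((1,0) : Fin n × Fin 2) ∧ j = ((0,1) : Fin n × Fin 2) ∧
          k = ((0,1) : Fin n × Fin 2) then (if l = ((0,0) : Fin n × Fin 2) then -1 else 0)
      else if i = ((1,1) : Fin n × Fin 2) ∧ j = ((0,1) : Fin n × Fin 2) ∧
          k = ((0,1) : Fin n × Fin 2) then (if l = ((0,1) : Fin n × Fin 2) then 1 else 0)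
      else if i = ((1,0) : Fin n × Fin 2) ∧
          (j = ((0,0) : Fin n × Fin 2) ∧ k = ((0,1) : Fin n × Fin 2) ∨
           j = ((0,1) : Fin n × Fin 2) ∧ k = ((0,0) : Fin n × Fin 2)) then
        (if l = ((0,1) : Fin n × Fin 2) then 1 else 0)
      else if i = ((1,1) : Fin n × Fin 2) ∧
          (j = ((0,0) : Fin n × Fin 2) ∧ k = ((0,1) : Fin n × Fin 2) ∨
           j = ((0,1) : Fin n × Fin 2) ∧ k = ((0,0) : Fin n × Fin 2)) then
        (if l = ((0,0) : Fin n × Fin 2) then 1 else 0)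
      else 0 := by
  have c1 : pder7 l (fun p : Fin n × Fin 2 → ℝ => p ((0:Fin n),(0:Fin 2))) p
      = if l = ((0,0) : Fin n × Fin 2) then 1 else 0 := by
    rw [pder7_coord]
    split_ifs with h hb hc <;>
      first | rfl | exact absurd h.symm hb | exact absurd hc.symm h | simp
  have c2 : pder7 l (fun p : Fin n × Fin 2 → ℝ => p ((0:Fin n),(1:Fin 2))) p
      = if l = ((0,1) : Fin n × Fin 2) then 1 else 0 := by
    rw [pder7_coord]
    split_ifs with h hb hc <;>
      first | rfl | exact absurd h.symm hb | exact absurd hc.symm h | simp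
  have c1' : pder7 l (fun p : Fin n × Fin 2 → ℝ => -p ((0:Fin n),(0:Fin 2))) p
      = if l = ((0,0) : Fin n × Fin 2) then -1 else 0 := by
    rw [show (fun p : Fin n × Fin 2 → ℝ => -p ((0:Fin n),(0:Fin 2)))
        = (fun p : Fin n × Fin 2 → ℝ => -(fun q : Fin n × Fin 2 → ℝ => q ((0:Fin n),(0:Fin 2))) p)
        from rfl, pder7_neg, pder7_coord]
    split_ifs with h hb hc <;>
      first | rfl | exact absurd h.symm hb | exact absurd hc.symm h | simp
  have c2' : pder7 l (fun p : Fin n × Fin 2 → ℝ => -p ((0:Fin n),(1:Fin 2))) p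
      = if l = ((0,1) : Fin n × Fin 2) then -1 else 0 := by
    rw [show (fun p : Fin n × Fin 2 → ℝ => -p ((0:Fin n),(1:Fin 2)))
        = (fun p : Fin n × Fin 2 → ℝ => -(fun q : Fin n × Fin 2 → ℝ => q ((0:Fin n),(1:Fin 2))) p)
        from rfl, pder7_neg, pder7_coord]
    split_ifs with h hb hc <;>
      first | rfl | exact absurd h.symm hb | exact absurd hc.symm h | simp
  by_cases h1 : i = ((1,0) : Fin n × Fin 2) ∧ j = ((0,0) : Fin n × Fin 2) ∧
      k = ((0,0) : Fin n × Fin 2)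
  · have e : Gam7 n i j k = (fun q : Fin n × Fin 2 → ℝ => q ((0:Fin n),(0:Fin 2))) := by
      funext q; simp only [Gam7, if_pos h1]
    rw [e, c1, if_pos h1]
  by_cases h2 : i = ((1,1) : Fin n × Fin 2) ∧ j = ((0,0) : Fin n × Fin 2) ∧
      k = ((0,0) : Fin n × Fin 2)
  · have e : Gam7 n i j k = (fun q : Fin n × Fin 2 → ℝ => -q ((0:Fin n),(1:Fin 2))) := by
      funext q; simp only [Gam7, if_neg h1, if_pos h2]
    rw [e, c2', if_neg h1, if_pos h2]
  by_cases h3 : i = ((1,0) : Fin n × Fin 2) ∧ j = ((0,1) : Fin n × Fin 2) ∧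
      k = ((0,1) : Fin n × Fin 2)
  · have e : Gam7 n i j k = (fun q : Fin n × Fin 2 → ℝ => -q ((0:Fin n),(0:Fin 2))) := by
      funext q; simp only [Gam7, if_neg h1, if_neg h2, if_pos h3]
    rw [e, c1', if_neg h1, if_neg h2, if_pos h3]
  by_cases h4 : i = ((1,1) : Fin n × Fin 2) ∧ j = ((0,1) : Fin n × Fin 2) ∧
      k = ((0,1) : Fin n × Fin 2)
  · have e : Gam7 n i j k = (fun q : Fin n × Fin 2 → ℝ => q ((0:Fin n),(1:Fin 2))) := by
      funext q; simp only [Gam7, if_neg h1, if_neg h2, if_neg h3, if_pos h4]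
    rw [e, c2, if_neg h1, if_neg h2, if_neg h3, if_pos h4]
  by_cases h5 : i = ((1,0) : Fin n × Fin 2) ∧
      (j = ((0,0) : Fin n × Fin 2) ∧ k = ((0,1) : Fin n × Fin 2) ∨
       j = ((0,1) : Fin n × Fin 2) ∧ k = ((0,0) : Fin n × Fin 2))
  · have e : Gam7 n i j k = (fun q : Fin n × Fin 2 → ℝ => q ((0:Fin n),(1:Fin 2))) := by
      funext q; simp only [Gam7, if_neg h1, if_neg h2, if_neg h3, if_neg h4, if_pos h5]
    rw [e, c2, if_neg h1, if_neg h2, if_neg h3, if_neg h4, if_pos h5]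
  by_cases h6 : i = ((1,1) : Fin n × Fin 2) ∧
      (j = ((0,0) : Fin n × Fin 2) ∧ k = ((0,1) : Fin n × Fin 2) ∨
       j = ((0,1) : Fin n × Fin 2) ∧ k = ((0,0) : Fin n × Fin 2))
  · have e : Gam7 n i j k = (fun q : Fin n × Fin 2 → ℝ => q ((0:Fin n),(0:Fin 2))) := by
      funext q; simp only [Gam7, if_neg h1, if_neg h2, if_neg h3, if_neg h4, if_neg h5,
        if_pos h6]
    rw [e, c1, if_neg h1, if_neg h2, if_neg h3, if_neg h4, if_neg h5, if_pos h6]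
  · have e : Gam7 n i j k = (fun _ : Fin n × Fin 2 → ℝ => (0:ℝ)) := by
      funext q; simp only [Gam7, if_neg h1, if_neg h2, if_neg h3, if_neg h4, if_neg h5,
        if_neg h6]
    rw [e, pder7_const, if_neg h1, if_neg h2, if_neg h3, if_neg h4, if_neg h5, if_neg h6]

lemma sum_pair7 (a b : Fin n × Fin 2) (hab : a ≠ b) (f : Fin n × Fin 2 → ℝ)
    (h : ∀ l, l ≠ a → l ≠ b → f l = 0) : ∑ l, f l = f a + f b := by
  rw [show f a + f b = ∑ l ∈ ({a, b} : Finset (Fin n × Fin 2)), f l from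
      (Finset.sum_pair hab).symm]
  exact (Finset.sum_subset (Finset.subset_univ _) (fun x _ hx => by
    simp only [Finset.mem_insert, Finset.mem_singleton, not_or] at hx
    exact h x hx.1 hx.2)).symm
lemma vRe_00 (p : Fin n × Fin 2 → ℝ) : vRe7 n p ((0:Fin n),(0:Fin 2)) = 1/2 := by
  simp [vRe7]

lemma vRe_01 (hn : 2 ≤ n) (p : Fin n × Fin 2 → ℝ) : vRe7 n p ((0:Fin n),(1:Fin 2)) = 0 := by
  simp [vRe7, Prod.ext_iff, h01 hn]

lemma vIm_00 (hn : 2 ≤ n) (p : Fin n × Fin 2 → ℝ) : vIm7 n p ((0:Fin n),(0:Fin 2)) = 0 := by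
  simp [vIm7, Prod.ext_iff, h01 hn]

lemma vIm_01 (p : Fin n × Fin 2 → ℝ) : vIm7 n p ((0:Fin n),(1:Fin 2)) = -(1/2) := by
  simp [vIm7]

lemma Gam_left (hn : 2 ≤ n) (l j k : Fin n × Fin 2) (p : Fin n × Fin 2 → ℝ)
    (h0 : l ≠ ((1,0) : Fin n × Fin 2)) (h1 : l ≠ ((1,1) : Fin n × Fin 2)) :
    Gam7 n l j k p = 0 := by
  have h1' : l ≠ (1 : Fin n × Fin 2) := by rw [← Prod.mk_one_one]; exact h1
  simp [Gam7, h0, h1, h1']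

lemma Gam_mid (hn : 2 ≤ n) (i l k : Fin n × Fin 2) (p : Fin n × Fin 2 → ℝ)
    (h0 : l ≠ ((0,0) : Fin n × Fin 2)) (h1 : l ≠ ((0,1) : Fin n × Fin 2)) :
    Gam7 n i l k p = 0 := by
  have h0' : l ≠ (0 : Fin n × Fin 2) := by rw [← Prod.mk_zero_zero]; exact h0
  simp [Gam7, h0, h1, h0']

lemma Gam_right (hn : 2 ≤ n) (i j l : Fin n × Fin 2) (p : Fin n × Fin 2 → ℝ)
    (h0 : l ≠ ((0,0) : Fin n × Fin 2)) (h1 : l ≠ ((0,1) : Fin n × Fin 2)) :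
    Gam7 n i j l p = 0 := by
  have h0' : l ≠ (0 : Fin n × Fin 2) := by rw [← Prod.mk_zero_zero]; exact h0
  simp [Gam7, h0, h1, h0']

lemma LvGam_vRe (hn : 2 ≤ n) (i j k : Fin n × Fin 2) (p : Fin n × Fin 2 → ℝ) :
    LvGam7 n (Gam7 n) (vRe7 n) i j k p = 0 := by
  have N2 : ((0,0) : Fin n × Fin 2) ≠ ((0,1) : Fin n × Fin 2) := by simp [Prod.ext_iff]
  have N2' : ((0,1) : Fin n × Fin 2) ≠ ((0,0) : Fin n × Fin 2) := by simp [Prod.ext_iff]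
  have a100 : (((1:Fin n),(0:Fin 2)) = ((0:Fin n),(0:Fin 2))) = False := by
    simp [Prod.ext_iff, (h01 hn).symm]
  have a101 : (((1:Fin n),(0:Fin 2)) = ((0:Fin n),(1:Fin 2))) = False := by
    simp [Prod.ext_iff]
  have a110 : (((1:Fin n),(1:Fin 2)) = ((0:Fin n),(0:Fin 2))) = False := by
    simp [Prod.ext_iff, (h01 hn).symm]
  have a111 : (((1:Fin n),(1:Fin 2)) = ((0:Fin n),(1:Fin 2))) = False := by
    simp [Prod.ext_iff, (h01 hn).symm]
  have hA : ∑ l, vRe7 n p l * pder7 l (Gam7 n i j k) p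
      = vRe7 n p ((0,0) : Fin n × Fin 2) * pder7 ((0,0) : Fin n × Fin 2) (Gam7 n i j k) p
        + vRe7 n p ((0,1) : Fin n × Fin 2) * pder7 ((0,1) : Fin n × Fin 2) (Gam7 n i j k) p :=
    sum_pair7 _ _ N2 _ (fun l h0 h1 => by
      rw [pder_Gam]
      simp only [h0, h1, if_false, ite_self, mul_zero])
  have hB : ∑ l, pder7 l (fun q => vRe7 n q i) p * Gam7 n l j k p = 0 := by
    refine Finset.sum_eq_zero (fun l _ => ?_)
    by_cases h0 : l = ((1,0) : Fin n × Fin 2)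
    · subst h0
      rw [pder_vRe hn]
      simp only [a100, a101, if_false, ite_self, zero_mul]
    · by_cases h1 : l = ((1,1) : Fin n × Fin 2)
      · subst h1
        rw [pder_vRe hn]
        simp only [a110, a111, if_false, ite_self, zero_mul]
      · rw [Gam_left hn _ _ _ _ h0 h1, mul_zero]
  have hC : ∑ l, pder7 j (fun q => vRe7 n q l) p * Gam7 n i l k p = 0 := by
    refine Finset.sum_eq_zero (fun l _ => ?_)
    by_cases h0 : l = ((1,0) : Fin n × Fin 2)
    · subst h0
      rw [Gam_mid hn _ _ _ _ (fun h => False.elim (a100 ▸ h)) (fun h => False.elim (a101 ▸ h)),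
        mul_zero]
    · by_cases h1 : l = ((1,1) : Fin n × Fin 2)
      · subst h1
        rw [Gam_mid hn _ _ _ _ (fun h => False.elim (a110 ▸ h)) (fun h => False.elim (a111 ▸ h)),
          mul_zero]
      · rw [pder_vRe hn]
        simp only [h0, h1, if_false, ite_self, zero_mul]
  have hD : ∑ l, pder7 k (fun q => vRe7 n q l) p * Gam7 n i j l p = 0 := by
    refine Finset.sum_eq_zero (fun l _ => ?_)
    by_cases h0 : l = ((1,0) : Fin n × Fin 2)
    · subst h0
      rw [Gam_right hn _ _ _ _ (fun h => False.elim (a100 ▸ h)) (fun h => False.elim (a101 ▸ h)),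
        mul_zero]
    · by_cases h1 : l = ((1,1) : Fin n × Fin 2)
      · subst h1
        rw [Gam_right hn _ _ _ _ (fun h => False.elim (a110 ▸ h)) (fun h => False.elim (a111 ▸ h)),
          mul_zero]
      · rw [pder_vRe hn]
        simp only [h0, h1, if_false, ite_self, zero_mul]
  rw [LvGam7, hA, hB, hC, hD, pder_Gam, pder_Gam, vRe_00, vRe_01 hn, pder2_vRe hn]
  simp only [eq_self_iff_true, if_true, eq_false N2, eq_false N2', if_false, zero_mul, mul_zero,
    add_zero, zero_add, sub_zero]
  clear hA hB hC hD a100 a101 a110 a111 N2 N2'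
  split_ifs <;> try norm_num
  all_goals simp_all [Prod.ext_iff]

lemma LvGam_vIm (hn : 2 ≤ n) (i j k : Fin n × Fin 2) (p : Fin n × Fin 2 → ℝ) :
    LvGam7 n (Gam7 n) (vIm7 n) i j k p = 0 := by
  have N2 : ((0,0) : Fin n × Fin 2) ≠ ((0,1) : Fin n × Fin 2) := by simp [Prod.ext_iff]
  have N2' : ((0,1) : Fin n × Fin 2) ≠ ((0,0) : Fin n × Fin 2) := by simp [Prod.ext_iff]
  have a100 : (((1:Fin n),(0:Fin 2)) = ((0:Fin n),(0:Fin 2))) = False := by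
    simp [Prod.ext_iff, (h01 hn).symm]
  have a101 : (((1:Fin n),(0:Fin 2)) = ((0:Fin n),(1:Fin 2))) = False := by
    simp [Prod.ext_iff]
  have a110 : (((1:Fin n),(1:Fin 2)) = ((0:Fin n),(0:Fin 2))) = False := by
    simp [Prod.ext_iff, (h01 hn).symm]
  have a111 : (((1:Fin n),(1:Fin 2)) = ((0:Fin n),(1:Fin 2))) = False := by
    simp [Prod.ext_iff, (h01 hn).symm]
  have hA : ∑ l, vIm7 n p l * pder7 l (Gam7 n i j k) p
      = vIm7 n p ((0,0) : Fin n × Fin 2) * pder7 ((0,0) : Fin n × Fin 2) (Gam7 n i j k) p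
        + vIm7 n p ((0,1) : Fin n × Fin 2) * pder7 ((0,1) : Fin n × Fin 2) (Gam7 n i j k) p :=
    sum_pair7 _ _ N2 _ (fun l h0 h1 => by
      rw [pder_Gam]
      simp only [h0, h1, if_false, ite_self, mul_zero])
  have hB : ∑ l, pder7 l (fun q => vIm7 n q i) p * Gam7 n l j k p = 0 := by
    refine Finset.sum_eq_zero (fun l _ => ?_)
    by_cases h0 : l = ((1,0) : Fin n × Fin 2)
    · subst h0
      rw [pder_vIm hn]
      simp only [a100, a101, if_false, ite_self, zero_mul]
    · by_cases h1 : l = ((1,1) : Fin n × Fin 2)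
      · subst h1
        rw [pder_vIm hn]
        simp only [a110, a111, if_false, ite_self, zero_mul]
      · rw [Gam_left hn _ _ _ _ h0 h1, mul_zero]
  have hC : ∑ l, pder7 j (fun q => vIm7 n q l) p * Gam7 n i l k p = 0 := by
    refine Finset.sum_eq_zero (fun l _ => ?_)
    by_cases h0 : l = ((1,0) : Fin n × Fin 2)
    · subst h0
      rw [Gam_mid hn _ _ _ _ (fun h => False.elim (a100 ▸ h)) (fun h => False.elim (a101 ▸ h)),
        mul_zero]
    · by_cases h1 : l = ((1,1) : Fin n × Fin 2)
      · subst h1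
        rw [Gam_mid hn _ _ _ _ (fun h => False.elim (a110 ▸ h)) (fun h => False.elim (a111 ▸ h)),
          mul_zero]
      · rw [pder_vIm hn]
        simp only [h0, h1, if_false, ite_self, zero_mul]
  have hD : ∑ l, pder7 k (fun q => vIm7 n q l) p * Gam7 n i j l p = 0 := by
    refine Finset.sum_eq_zero (fun l _ => ?_)
    by_cases h0 : l = ((1,0) : Fin n × Fin 2)
    · subst h0
      rw [Gam_right hn _ _ _ _ (fun h => False.elim (a100 ▸ h)) (fun h => False.elim (a101 ▸ h)),
        mul_zero]
    · by_cases h1 : l = ((1,1) : Fin n × Fin 2)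
      · subst h1
        rw [Gam_right hn _ _ _ _ (fun h => False.elim (a110 ▸ h)) (fun h => False.elim (a111 ▸ h)),
          mul_zero]
      · rw [pder_vIm hn]
        simp only [h0, h1, if_false, ite_self, zero_mul]
  rw [LvGam7, hA, hB, hC, hD, pder_Gam, pder_Gam, vIm_00 hn, vIm_01, pder2_vIm hn]
  simp only [eq_self_iff_true, if_true, eq_false N2, eq_false N2', if_false, zero_mul, mul_zero,
    add_zero, zero_add, sub_zero]
  clear hA hB hC hD a100 a101 a110 a111 N2 N2'
  split_ifs <;> try norm_num
  all_goals simp_all [Prod.ext_iff]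

lemma LvJ_vRe (hn : 2 ≤ n) (i j : Fin n × Fin 2) (p : Fin n × Fin 2 → ℝ) :
    (∑ l, vRe7 n p l * pder7 l (fun _ => Jstd7 n i j) p)
    + (∑ l, Jstd7 n i l * pder7 j (fun q => vRe7 n q l) p)
    - (∑ l, Jstd7 n l j * pder7 l (fun q => vRe7 n q i) p) = 0 := by
  have N1 : ((1,0) : Fin n × Fin 2) ≠ ((1,1) : Fin n × Fin 2) := by simp [Prod.ext_iff]
  have N2 : ((0,0) : Fin n × Fin 2) ≠ ((0,1) : Fin n × Fin 2) := by simp [Prod.ext_iff]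
  have hS1 : ∑ l, vRe7 n p l * pder7 l (fun _ => Jstd7 n i j) p = 0 :=
    Finset.sum_eq_zero (fun l _ => by rw [pder7_const, mul_zero])
  have hS2 : ∑ l, Jstd7 n i l * pder7 j (fun q => vRe7 n q l) p
      = Jstd7 n i ((1,0) : Fin n × Fin 2) * pder7 j (fun q => vRe7 n q ((1,0) : Fin n × Fin 2)) p
        + Jstd7 n i ((1,1) : Fin n × Fin 2)
          * pder7 j (fun q => vRe7 n q ((1,1) : Fin n × Fin 2)) p :=
    sum_pair7 _ _ N1 _ (fun l h0 h1 => by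
      rw [pder_vRe hn]
      simp only [h0, h1, if_false, ite_self, mul_zero])
  have hS3 : ∑ l, Jstd7 n l j * pder7 l (fun q => vRe7 n q i) p
      = Jstd7 n ((0,0) : Fin n × Fin 2) j * pder7 ((0,0) : Fin n × Fin 2) (fun q => vRe7 n q i) p
        + Jstd7 n ((0,1) : Fin n × Fin 2) j
          * pder7 ((0,1) : Fin n × Fin 2) (fun q => vRe7 n q i) p :=
    sum_pair7 _ _ N2 _ (fun l h0 h1 => by
      rw [pder_vRe hn]
      simp only [h0, h1, if_false, ite_self, mul_zero])
  rw [hS1, hS2, hS3, pder_vRe hn, pder_vRe hn, pder_vRe hn, pder_vRe hn]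
  obtain ⟨i1, i2⟩ := i
  obtain ⟨j1, j2⟩ := j
  fin_cases i2 <;> fin_cases j2 <;>
    by_cases hi : i1 = (1 : Fin n) <;> by_cases hj : j1 = (0 : Fin n) <;>
      simp [Jstd7, Prod.mk.injEq, Prod.ext_iff, hi, hj, @eq_comm _ (0 : Fin n),
        h01 hn, (h01 hn).symm] <;>
      ring

lemma LvJ_vIm (hn : 2 ≤ n) (i j : Fin n × Fin 2) (p : Fin n × Fin 2 → ℝ) :
    (∑ l, vIm7 n p l * pder7 l (fun _ => Jstd7 n i j) p)
    + (∑ l, Jstd7 n i l * pder7 j (fun q => vIm7 n q l) p)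
    - (∑ l, Jstd7 n l j * pder7 l (fun q => vIm7 n q i) p) = 0 := by
  have N1 : ((1,0) : Fin n × Fin 2) ≠ ((1,1) : Fin n × Fin 2) := by simp [Prod.ext_iff]
  have N2 : ((0,0) : Fin n × Fin 2) ≠ ((0,1) : Fin n × Fin 2) := by simp [Prod.ext_iff]
  have hS1 : ∑ l, vIm7 n p l * pder7 l (fun _ => Jstd7 n i j) p = 0 :=
    Finset.sum_eq_zero (fun l _ => by rw [pder7_const, mul_zero])
  have hS2 : ∑ l, Jstd7 n i l * pder7 j (fun q => vIm7 n q l) p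
      = Jstd7 n i ((1,0) : Fin n × Fin 2) * pder7 j (fun q => vIm7 n q ((1,0) : Fin n × Fin 2)) p
        + Jstd7 n i ((1,1) : Fin n × Fin 2)
          * pder7 j (fun q => vIm7 n q ((1,1) : Fin n × Fin 2)) p :=
    sum_pair7 _ _ N1 _ (fun l h0 h1 => by
      rw [pder_vIm hn]
      simp only [h0, h1, if_false, ite_self, mul_zero])
  have hS3 : ∑ l, Jstd7 n l j * pder7 l (fun q => vIm7 n q i) p
      = Jstd7 n ((0,0) : Fin n × Fin 2) j * pder7 ((0,0) : Fin n × Fin 2) (fun q => vIm7 n q i) p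
        + Jstd7 n ((0,1) : Fin n × Fin 2) j
          * pder7 ((0,1) : Fin n × Fin 2) (fun q => vIm7 n q i) p :=
    sum_pair7 _ _ N2 _ (fun l h0 h1 => by
      rw [pder_vIm hn]
      simp only [h0, h1, if_false, ite_self, mul_zero])
  rw [hS1, hS2, hS3, pder_vIm hn, pder_vIm hn, pder_vIm hn, pder_vIm hn]
  obtain ⟨i1, i2⟩ := i
  obtain ⟨j1, j2⟩ := j
  fin_cases i2 <;> fin_cases j2 <;>
    by_cases hi : i1 = (1 : Fin n) <;> by_cases hj : j1 = (0 : Fin n) <;>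
      simp [Jstd7, Prod.mk.injEq, Prod.ext_iff, hi, hj, @eq_comm _ (0 : Fin n),
        h01 hn, (h01 hn).symm] <;>
      ring

lemma isCproj_vRe (hn : 2 ≤ n) : IsCprojSym7 n (vRe7 n) := by
  refine ⟨fun i j p => LvJ_vRe hn i j p, ⟨fun _ _ => 0, fun i j k p => ?_⟩⟩
  rw [LvGam_vRe hn]
  simp

lemma isCproj_vIm (hn : 2 ≤ n) : IsCprojSym7 n (vIm7 n) := by
  refine ⟨fun i j p => LvJ_vIm hn i j p, ⟨fun _ _ => 0, fun i j k p => ?_⟩⟩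
  rw [LvGam_vIm hn]
  simp

end main

/-- for the connection on `ℂⁿ` (`n ≥ 2`) with the only nonzero complex
Christoffel symbol `Γ²₁₁ = z̄¹` (plus conjugate), the real and imaginary parts of
`∂_{z¹} - (1/2)(z̄¹)² ∂_{z̄²}` are c-projective symmetries of `(J, [∇])`. -/
theorem submaximal_cprojective_stmt7 (n : ℕ) (hn : 2 ≤ n) :
    haveI : NeZero n := ⟨by omega⟩
    IsCprojSym7 n (vRe7 n) ∧ IsCprojSym7 n (vIm7 n) := by
  haveI : NeZero n := ⟨by omega⟩
  exact ⟨isCproj_vRe hn, isCproj_vIm hn⟩
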